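/- Under the setup of the previous identity, |H₀(η²)| ≥ σ₀² |η₀² − η²| 𝔳(Λ) / (η²λ_1 + 1)⁴, where 𝔳(Λ) = (1/n)Σ λ_i² − ((1/n)Σ λ_i)² and λ_1 = max_i λ_i. -/

import Mathlib

/-- Lower bound `|H₀(η²)| ≥ σ₀² |η₀² − η²| 𝔳(Λ) / (η²λ₁ + 1)⁴`. -/
theorem stmt4 {n : ℕ} (hn : 0 < n) (σ0sq η0sq : ℝ) (hσ : 0 < σ0sq) (hη0 : 0 ≤ η0sq)
    (lam : Fin n → ℝ) (hdec : Antitone lam) (hnn : ∀ i, 0 ≤ lam i)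
    (ηsq : ℝ) (hη : 0 ≤ ηsq) :
    |(σ0sq / (2 * (n : ℝ) ^ 2)) * ∑ i, ∑ j,
        (η0sq - ηsq) * (lam i - lam j) ^ 2
          / ((ηsq * lam i + 1) ^ 2 * (ηsq * lam j + 1) ^ 2)|
      ≥ σ0sq * |η0sq - ηsq|
          * ((1 / (n : ℝ)) * ∑ i, (lam i) ^ 2 - ((1 / (n : ℝ)) * ∑ i, lam i) ^ 2)
          / (ηsq * lam ⟨0, hn⟩ + 1) ^ 4 := by
  have hnR : (0:ℝ) < n := Nat.cast_pos.mpr hn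
  set d : Fin n → ℝ := fun i => ηsq * lam i + 1 with hd
  have hd1 : ∀ i, 1 ≤ d i := by
    intro i
    have := mul_nonneg hη (hnn i)
    simp only [hd]; linarith
  have hdpos : ∀ i, 0 < d i := fun i => lt_of_lt_of_le one_pos (hd1 i)
  have hdle : ∀ i, d i ≤ d ⟨0, hn⟩ := by
    intro i
    have h0 : (⟨0, hn⟩ : Fin n) ≤ i := by
      simp [Fin.le_def]
    have hlle := hdec h0
    simp only [hd]
    nlinarith
  set D := d ⟨0, hn⟩ with hDdef
  have hDpos : 0 < D := hdpos _
  set T := ∑ i, ∑ j, (lam i - lam j)^2 / ((d i)^2 * (d j)^2) with hT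
  have hsum : (∑ i, ∑ j, (η0sq - ηsq) * (lam i - lam j)^2 / ((d i)^2 * (d j)^2))
      = (η0sq - ηsq) * T := by
    simp [hT, Finset.mul_sum, mul_div_assoc]
  have hTnn : 0 ≤ T := by
    apply Finset.sum_nonneg; intro i _
    apply Finset.sum_nonneg; intro j _
    positivity
  -- lower bound on T
  have hTlb : (∑ i, ∑ j, (lam i - lam j)^2) / D^4 ≤ T := by
    rw [Finset.sum_div]
    apply Finset.sum_le_sum
    intro i _
    rw [Finset.sum_div]
    apply Finset.sum_le_sum
    intro j _
    have hden : (d i)^2 * (d j)^2 ≤ D^4 := by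
      have hi := hdle i
      have hj := hdle j
      have hij : d i * d j ≤ D * D :=
        mul_le_mul hi hj (hdpos j).le hDpos.le
      calc (d i)^2 * (d j)^2 = (d i * d j)^2 := by ring
        _ ≤ (D * D)^2 := pow_le_pow_left₀ (mul_nonneg (hdpos i).le (hdpos j).le) hij 2
        _ = D^4 := by ring
    have hdenpos : 0 < (d i)^2 * (d j)^2 := mul_pos (pow_pos (hdpos i) 2) (pow_pos (hdpos j) 2)
    rw [div_le_div_iff₀ (pow_pos hDpos 4) hdenpos]
    exact mul_le_mul_of_nonneg_left hden (sq_nonneg _)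
  -- sum identity
  have hid : ∑ i, ∑ j, (lam i - lam j)^2
      = 2 * n * (∑ i, (lam i)^2) - 2 * (∑ i, lam i)^2 := by
    have h1 : ∀ i : Fin n, ∑ j, (lam i - lam j)^2
        = n * (lam i)^2 - 2 * lam i * (∑ j, lam j) + ∑ j, (lam j)^2 := by
      intro i
      have : ∀ j : Fin n, (lam i - lam j)^2
          = (lam i)^2 - 2 * lam i * lam j + (lam j)^2 := by intro j; ring
      simp only [this]
      rw [Finset.sum_add_distrib, Finset.sum_sub_distrib, Finset.sum_const,
        Finset.card_univ, Fintype.card_fin, ← Finset.mul_sum]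
      push_cast
      ring
    simp only [h1]
    rw [Finset.sum_add_distrib, Finset.sum_sub_distrib, ← Finset.mul_sum,
      Finset.sum_const, Finset.card_univ, Fintype.card_fin, nsmul_eq_mul]
    have h2 : ∑ i : Fin n, 2 * lam i * (∑ j, lam j) = 2 * (∑ j, lam j)^2 := by
      rw [← Finset.sum_mul, ← Finset.mul_sum]; ring
    rw [h2]; ring
  -- rewrite LHS
  rw [hsum, abs_mul, abs_mul, abs_of_nonneg (le_of_lt (by positivity : (0:ℝ) < σ0sq / (2 * (n:ℝ)^2))),
    abs_of_nonneg hTnn]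
  rw [ge_iff_le]
  have hV : σ0sq * |η0sq - ηsq|
      * ((1 / (n : ℝ)) * ∑ i, (lam i) ^ 2 - ((1 / (n : ℝ)) * ∑ i, lam i) ^ 2) / D ^ 4
      = σ0sq / (2 * (n:ℝ)^2) * (|η0sq - ηsq|
        * ((2 * n * (∑ i, (lam i)^2) - 2 * (∑ i, lam i)^2) / D^4)) := by
    field_simp
  calc σ0sq * |η0sq - ηsq|
      * ((1 / (n : ℝ)) * ∑ i, (lam i) ^ 2 - ((1 / (n : ℝ)) * ∑ i, lam i) ^ 2) / D ^ 4
      = σ0sq / (2 * (n:ℝ)^2) * (|η0sq - ηsq|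
        * ((∑ i, ∑ j, (lam i - lam j)^2) / D^4)) := by rw [hV, hid]
    _ ≤ σ0sq / (2 * (n:ℝ)^2) * (|η0sq - ηsq| * T) := by
        have h1 : (0:ℝ) ≤ σ0sq / (2 * (n:ℝ)^2) := by positivity
        have h2 : (0:ℝ) ≤ |η0sq - ηsq| := abs_nonneg _
        exact mul_le_mul_of_nonneg_left (mul_le_mul_of_nonneg_left hTlb h2) h1
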